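/- (Theorem 2 instantiated on the rectangle: minimal Fisher information.) Let Δ = (0,2) × (−1,2) ⊂ ℝ² and let ρ = u² be any probability density on Δ with u : Δ̄ → ℝ continuously differentiable on Δ, continuous on the closure, vanishing on the boundary of Δ, and ∫_Δ u² = 1 with ∫_Δ |∇u|² < ∞. Then the Fisher information satisfies F[ρ] = 4∫_Δ |∇u(x,y)|² dx dy ≥ 13π²/9, with equality for the ground-state density ρ_{1,1}(x,y) = (2/3) sin²(πx/2) sin²(π(y+1)/3) of the infinite potential well on Δ. -/

import Mathlib

open MeasureTheory Real

/-- The normalized ground state of the infinite potential well on the rectangle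
`Δ = (0,2) × (-1,2)`: `u_{1,1}(x,y) = √(2/3) sin(πx/2) sin(π(y+1)/3)`. -/
noncomputable def uBox11 (p : ℝ × ℝ) : ℝ :=
  Real.sqrt (2/3) * Real.sin (π * p.1 / 2) * Real.sin (π * (p.2 + 1) / 3)

open Set

lemma sq_setIntegral_le {s : Set ℝ} {m : ℝ} (hm : (volume s).toReal = m)
    (hfin : volume s ≠ ⊤) {g : ℝ → ℝ} (hg : IntegrableOn g s)
    (hg2 : IntegrableOn (fun x => g x ^ 2) s) :
    (∫ x in s, g x) ^ 2 ≤ m * ∫ x in s, g x ^ 2 := by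
  rcases eq_or_lt_of_le (ENNReal.toReal_nonneg (a := volume s)) with h0 | hpos
  · have hzero : volume s = 0 := by
      have := ENNReal.toReal_eq_zero_iff (volume s)
      rcases this.1 h0.symm with h | h
      · exact h
      · exact absurd h hfin
    rw [Measure.restrict_eq_zero.2 hzero]
    simp [← hm, h0.symm]
  · have hmpos : 0 < m := hm ▸ hpos
    set I := ∫ x in s, g x with hI
    set E := ∫ x in s, g x ^ 2 with hE
    set c : ℝ := I / m with hc
    have hconst : IntegrableOn (fun _ : ℝ => (2*c) * g 0 - (2*c) * g 0 + 1) s := by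
      exact (integrableOn_const_iff).2 (Or.inr (lt_top_iff_ne_top.2 hfin))
    have h0 : 0 ≤ ∫ x in s, (g x - c) ^ 2 := integral_nonneg fun x => sq_nonneg _
    have hexp : (fun x => (g x - c) ^ 2) =
        fun x => (g x ^ 2 - (2 * c) * g x) + c ^ 2 := by
      funext x; ring
    have hint1 : IntegrableOn (fun x => g x ^ 2 - (2 * c) * g x) s :=
      hg2.sub (hg.const_mul _)
    have hintc : IntegrableOn (fun _ : ℝ => c ^ 2) s :=
      (integrableOn_const_iff).2 (Or.inr (lt_top_iff_ne_top.2 hfin))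
    have hval : ∫ x in s, (g x - c) ^ 2 = (E - 2 * c * I) + m * c ^ 2 := by
      rw [hexp, integral_add hint1 hintc, integral_sub hg2 (hg.const_mul _),
        integral_const_mul, setIntegral_const, smul_eq_mul, measureReal_def, hm]
    rw [hval] at h0
    have hcm : m * c = I := by rw [hc]; field_simp
    nlinarith [h0, hcm, hmpos]

lemma sq_le_left {a b x : ℝ} (hax : a < x) (hxb : x < b) {f f' : ℝ → ℝ}
    (hc : ContinuousOn f (Icc a b)) (hd : ∀ y ∈ Ioo a b, HasDerivAt f (f' y) y)
    (hf'i : IntegrableOn f' (Ioo a b)) (hf2i : IntegrableOn (fun y => f' y ^ 2) (Ioo a b))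
    (ha0 : f a = 0) :
    f x ^ 2 ≤ (x - a) * ∫ t in Ioo a x, f' t ^ 2 := by
  have hsub : Ioo a x ⊆ Ioo a b := Ioo_subset_Ioo le_rfl hxb.le
  have hint : IntervalIntegrable f' volume a x :=
    (intervalIntegrable_iff_integrableOn_Ioo_of_le hax.le).2 (hf'i.mono_set hsub)
  have hftc : ∫ t in a..x, f' t = f x - f a :=
    intervalIntegral.integral_eq_sub_of_hasDerivAt_of_le hax.le
      (hc.mono (Icc_subset_Icc le_rfl hxb.le))
      (fun y hy => hd y ⟨hy.1, hy.2.trans hxb⟩) hint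
  rw [intervalIntegral.integral_of_le hax.le, integral_Ioc_eq_integral_Ioo, ha0, sub_zero] at hftc
  rw [← hftc]
  exact sq_setIntegral_le
    (by rw [Real.volume_Ioo, ENNReal.toReal_ofReal (by linarith)])
    (by rw [Real.volume_Ioo]; exact ENNReal.ofReal_ne_top)
    (hf'i.mono_set hsub) (hf2i.mono_set hsub)

lemma sq_le_right {a b x : ℝ} (hax : a < x) (hxb : x < b) {f f' : ℝ → ℝ}
    (hc : ContinuousOn f (Icc a b)) (hd : ∀ y ∈ Ioo a b, HasDerivAt f (f' y) y)
    (hf'i : IntegrableOn f' (Ioo a b)) (hf2i : IntegrableOn (fun y => f' y ^ 2) (Ioo a b))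
    (hb0 : f b = 0) :
    f x ^ 2 ≤ (b - x) * ∫ t in Ioo x b, f' t ^ 2 := by
  have hsub : Ioo x b ⊆ Ioo a b := Ioo_subset_Ioo hax.le le_rfl
  have hint : IntervalIntegrable f' volume x b :=
    (intervalIntegrable_iff_integrableOn_Ioo_of_le hxb.le).2 (hf'i.mono_set hsub)
  have hftc : ∫ t in x..b, f' t = f b - f x :=
    intervalIntegral.integral_eq_sub_of_hasDerivAt_of_le hxb.le
      (hc.mono (Icc_subset_Icc hax.le le_rfl))
      (fun y hy => hd y ⟨hax.trans hy.1, hy.2⟩) hint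
  rw [intervalIntegral.integral_of_le hxb.le, integral_Ioc_eq_integral_Ioo, hb0] at hftc
  have hfx : f x = -∫ t in Ioo x b, f' t := by linarith [hftc]
  rw [hfx, neg_pow]
  rw [show ((-1:ℝ))^2 = 1 by norm_num, one_mul]
  exact sq_setIntegral_le
    (by rw [Real.volume_Ioo, ENNReal.toReal_ofReal (by linarith)])
    (by rw [Real.volume_Ioo]; exact ENNReal.ofReal_ne_top)
    (hf'i.mono_set hsub) (hf2i.mono_set hsub)

lemma mul_cos_le_sin {θ : ℝ} (h0 : 0 < θ) (h2 : θ ≤ π/2) : θ * Real.cos θ ≤ Real.sin θ := by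
  rcases eq_or_lt_of_le h2 with he | hlt
  · rw [he, Real.cos_pi_div_two, mul_zero]
    rw [Real.sin_pi_div_two]
    norm_num
  · have hcos : 0 < Real.cos θ := Real.cos_pos_of_mem_Ioo ⟨by linarith [Real.pi_pos], hlt⟩
    have := Real.lt_tan h0 hlt
    rw [Real.tan_eq_sin_div_cos] at this
    calc θ * Real.cos θ ≤ (Real.sin θ / Real.cos θ) * Real.cos θ := by
          exact mul_le_mul_of_nonneg_right this.le hcos.le
      _ = Real.sin θ := by field_simp

lemma wirtinger_1d {a b : ℝ} (hab : a < b) {f f' : ℝ → ℝ}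
    (hc : ContinuousOn f (Icc a b))
    (hd : ∀ x ∈ Ioo a b, HasDerivAt f (f' x) x)
    (hf'c : ContinuousOn f' (Ioo a b))
    (hfi : IntegrableOn (fun x => f' x ^ 2) (Ioo a b))
    (ha0 : f a = 0) (hb0 : f b = 0) :
    (π / (b - a)) ^ 2 * ∫ x in Ioo a b, f x ^ 2 ≤ ∫ x in Ioo a b, f' x ^ 2 := by
  obtain ⟨c, hcdef⟩ : ∃ c : ℝ, c = π / (b - a) := ⟨_, rfl⟩
  have hbapos : 0 < b - a := by linarith
  have hcpos : 0 < c := by rw [hcdef]; exact div_pos Real.pi_pos hbapos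
  have hcL : c * (b - a) = π := by rw [hcdef]; field_simp
  -- basic integrability facts
  have hfIcc : IntegrableOn (fun x => f x ^ 2) (Icc a b) :=
    (hc.pow 2).integrableOn_compact isCompact_Icc
  have hf2i : IntegrableOn (fun x => f x ^ 2) (Ioo a b) := hfIcc.mono_set Ioo_subset_Icc_self
  have hf'i : IntegrableOn f' (Ioo a b) := by
    have hconst : IntegrableOn (fun _ : ℝ => (1:ℝ)) (Ioo a b) :=
      (integrableOn_const_iff).2 (Or.inr (by rw [Real.volume_Ioo]; exact ENNReal.ofReal_lt_top))
    have h1 : IntegrableOn (fun x => f' x ^ 2 + 1) (Ioo a b) := hfi.add hconst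
    refine h1.mono' (hf'c.aestronglyMeasurable measurableSet_Ioo) ?_
    refine Filter.Eventually.of_forall fun x => ?_
    rw [Real.norm_eq_abs]
    nlinarith [abs_nonneg (f' x), sq_abs (f' x), sq_nonneg (|f' x| - 1)]
  -- the auxiliary function w and its derivative
  obtain ⟨w, hwdef⟩ : ∃ w : ℝ → ℝ, w = fun x =>
      f x ^ 2 * (c * Real.cos (c * (x - a)) / Real.sin (c * (x - a))) := ⟨_, rfl⟩
  obtain ⟨w', hw'def⟩ : ∃ w' : ℝ → ℝ, w' = fun x =>
      2 * f x * f' x * (c * Real.cos (c * (x - a)) / Real.sin (c * (x - a)))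
        - f x ^ 2 * c ^ 2 / Real.sin (c * (x - a)) ^ 2 := ⟨_, rfl⟩
  have hsinpos : ∀ x ∈ Ioo a b, 0 < Real.sin (c * (x - a)) := by
    intro x hx
    apply Real.sin_pos_of_pos_of_lt_pi
    · exact mul_pos hcpos (by linarith [hx.1])
    · rw [← hcL]
      exact mul_lt_mul_of_pos_left (by linarith [hx.2]) hcpos
  have hw : ∀ x ∈ Ioo a b, HasDerivAt w (w' x) x := by
    intro x hx
    have hs := (hsinpos x hx).ne'
    have hinner : HasDerivAt (fun y => c * (y - a)) c x := by
      simpa using ((hasDerivAt_id x).sub_const a).const_mul c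
    have hsin : HasDerivAt (fun y => Real.sin (c * (y - a)))
        (Real.cos (c * (x - a)) * c) x := (Real.hasDerivAt_sin _).comp x hinner
    have hcos : HasDerivAt (fun y => Real.cos (c * (y - a)))
        (-Real.sin (c * (x - a)) * c) x := (Real.hasDerivAt_cos _).comp x hinner
    have hq : HasDerivAt (fun y => c * Real.cos (c * (y - a)) / Real.sin (c * (y - a)))
        ((c * (-Real.sin (c * (x - a)) * c) * Real.sin (c * (x - a))
          - c * Real.cos (c * (x - a)) * (Real.cos (c * (x - a)) * c))
            / Real.sin (c * (x - a)) ^ 2) x := (hcos.const_mul c).div hsin hs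
    have hf2 : HasDerivAt (fun y => f y ^ 2) (2 * f x * f' x) x := by
      simpa [mul_comm, mul_assoc, mul_left_comm] using (hd x hx).fun_pow 2
    have hnum : c * (-Real.sin (c * (x - a)) * c) * Real.sin (c * (x - a))
        - c * Real.cos (c * (x - a)) * (Real.cos (c * (x - a)) * c) = -(c ^ 2) := by
      linear_combination (-(c ^ 2)) * Real.sin_sq_add_cos_sq (c * (x - a))
    have hmain := hf2.fun_mul hq
    rw [hwdef, hw'def]
    simp only []
    convert hmain using 1 <;> try rfl
    rw [hnum]
    field_simp
    ring
  -- continuity facts on the open interval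
  have hfcIoo : ContinuousOn f (Ioo a b) := hc.mono Ioo_subset_Icc_self
  have hsinc : ContinuousOn (fun x => Real.sin (c * (x - a))) (Ioo a b) :=
    (Real.continuous_sin.comp ((continuous_const.mul (continuous_id.sub continuous_const)))).continuousOn
  have hcosc : ContinuousOn (fun x => Real.cos (c * (x - a))) (Ioo a b) :=
    (Real.continuous_cos.comp ((continuous_const.mul (continuous_id.sub continuous_const)))).continuousOn
  have hQc : ContinuousOn (fun x => c * Real.cos (c * (x - a)) / Real.sin (c * (x - a)))
      (Ioo a b) :=
    ((continuousOn_const.mul hcosc).div hsinc fun x hx => (hsinpos x hx).ne')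
  have hw'c : ContinuousOn w' (Ioo a b) := by
    rw [hw'def]
    refine ContinuousOn.sub ?_ ?_
    · exact ((continuousOn_const.mul hfcIoo).mul hf'c).mul hQc
    · exact ((hfcIoo.pow 2).mul continuousOn_const).div (hsinc.pow 2)
        fun x hx => pow_ne_zero 2 (hsinpos x hx).ne'
  have hgc : ContinuousOn (fun x => f' x ^ 2 - c ^ 2 * f x ^ 2) (Ioo a b) :=
    (hf'c.pow 2).sub (continuousOn_const.mul (hfcIoo.pow 2))
  -- the approximating sequences
  obtain ⟨sn, hsndef⟩ : ∃ sn : ℕ → ℝ, sn = fun n : ℕ => a + (b - a) / (n + 2) := ⟨_, rfl⟩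
  obtain ⟨tn, htndef⟩ : ∃ tn : ℕ → ℝ, tn = fun n : ℕ => b - (b - a) / (n + 2) := ⟨_, rfl⟩
  have hden : ∀ n : ℕ, (0:ℝ) < (n : ℝ) + 2 := fun n => by positivity
  have hdpos : ∀ n : ℕ, 0 < (b - a) / ((n:ℝ) + 2) := fun n => div_pos hbapos (hden n)
  have hdle : ∀ n : ℕ, (b - a) / ((n:ℝ) + 2) ≤ (b - a) / 2 := fun n =>
    div_le_div_of_nonneg_left hbapos.le (by norm_num) (by push_cast; linarith [Nat.cast_nonneg (α := ℝ) n])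
  have hsn_mem : ∀ n, sn n ∈ Ioo a b := by
    intro n; rw [hsndef]
    constructor
    · simpa using hdpos n
    · have := hdle n; simp only []; linarith
  have htn_mem : ∀ n, tn n ∈ Ioo a b := by
    intro n; rw [htndef]
    constructor
    · have := hdle n; simp only []; linarith
    · simpa using hdpos n
  have hst : ∀ n, sn n ≤ tn n := by
    intro n; rw [hsndef, htndef]; have := hdle n; simp only []; linarith
  have hθs : ∀ n, c * (sn n - a) = π / ((n:ℝ) + 2) := by
    intro n; rw [hsndef]
    simp only []
    rw [add_sub_cancel_left, ← mul_div_assoc, hcL]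
  have hθt : ∀ n, c * (b - tn n) = π / ((n:ℝ) + 2) := by
    intro n; rw [htndef]
    simp only [sub_sub_cancel]
    rw [← mul_div_assoc, hcL]
  have hθmem : ∀ n : ℕ, 0 < π / ((n:ℝ) + 2) ∧ π / ((n:ℝ) + 2) ≤ π / 2 := by
    intro n
    constructor
    · exact div_pos Real.pi_pos (hden n)
    · exact div_le_div_of_nonneg_left Real.pi_pos.le (by norm_num)
        (by push_cast; linarith [Nat.cast_nonneg (α := ℝ) n])
  -- bounds for w at the endpoints of the subintervals
  have hws_nonneg : ∀ n, 0 ≤ w (sn n) := by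
    intro n
    rw [hwdef]
    have h1 := (hθmem n).1; have h2 := (hθmem n).2
    have hcosn : 0 ≤ Real.cos (c * (sn n - a)) := by
      rw [hθs n]; exact Real.cos_nonneg_of_mem_Icc ⟨by linarith [Real.pi_pos], h2⟩
    have hsinn : 0 < Real.sin (c * (sn n - a)) := hsinpos _ (hsn_mem n)
    positivity
  have hws_le : ∀ n, w (sn n) ≤ ∫ t in Ioo a (sn n), f' t ^ 2 := by
    intro n
    have h1 := (hθmem n).1; have h2 := (hθmem n).2
    have hsinn : 0 < Real.sin (c * (sn n - a)) := hsinpos _ (hsn_mem n)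
    have hsa : 0 < sn n - a := by linarith [(hsn_mem n).1]
    have hQle : c * Real.cos (c * (sn n - a)) / Real.sin (c * (sn n - a)) ≤ 1 / (sn n - a) := by
      rw [div_le_div_iff₀ hsinn hsa]
      have := mul_cos_le_sin (θ := c * (sn n - a)) (by rw [hθs n]; exact h1) (by rw [hθs n]; exact h2)
      nlinarith
    have hsq := sq_le_left (hsn_mem n).1 (hsn_mem n).2 hc hd hf'i hfi ha0
    have hE1nn : 0 ≤ ∫ t in Ioo a (sn n), f' t ^ 2 := integral_nonneg fun t => sq_nonneg _
    rw [hwdef]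
    calc f (sn n) ^ 2 * (c * Real.cos (c * (sn n - a)) / Real.sin (c * (sn n - a)))
        ≤ f (sn n) ^ 2 * (1 / (sn n - a)) :=
          mul_le_mul_of_nonneg_left hQle (sq_nonneg _)
      _ ≤ ((sn n - a) * ∫ t in Ioo a (sn n), f' t ^ 2) * (1 / (sn n - a)) :=
          mul_le_mul_of_nonneg_right hsq (by positivity)
      _ = ∫ t in Ioo a (sn n), f' t ^ 2 := by field_simp
  have hwt_nonpos : ∀ n, w (tn n) ≤ 0 := by
    intro n
    have h1 := (hθmem n).1; have h2 := (hθmem n).2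
    have hsinn : 0 < Real.sin (c * (tn n - a)) := hsinpos _ (htn_mem n)
    have hrw : c * (tn n - a) = π - c * (b - tn n) := by
      have := hcL; ring_nf; ring_nf at this ⊢; linarith [hθt n, hθs n]
    have hcosn : Real.cos (c * (tn n - a)) ≤ 0 := by
      rw [hrw, Real.cos_pi_sub, hθt n, neg_nonpos]
      exact Real.cos_nonneg_of_mem_Icc ⟨by linarith [Real.pi_pos], h2⟩
    rw [hwdef]
    have : c * Real.cos (c * (tn n - a)) / Real.sin (c * (tn n - a)) ≤ 0 := by
      apply div_nonpos_of_nonpos_of_nonneg _ hsinn.le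
      exact mul_nonpos_of_nonneg_of_nonpos hcpos.le hcosn
    exact mul_nonpos_of_nonneg_of_nonpos (sq_nonneg _) this
  have hwt_le : ∀ n, -w (tn n) ≤ ∫ t in Ioo (tn n) b, f' t ^ 2 := by
    intro n
    have h1 := (hθmem n).1; have h2 := (hθmem n).2
    have hsinn : 0 < Real.sin (c * (tn n - a)) := hsinpos _ (htn_mem n)
    have htb : 0 < b - tn n := by linarith [(htn_mem n).2]
    have hrw : c * (tn n - a) = π - c * (b - tn n) := by
      have h3 := hθt n; have h4 := hθs n; ring_nf at h3 h4 ⊢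
      nlinarith [hcL]
    have hsin2 : Real.sin (c * (tn n - a)) = Real.sin (c * (b - tn n)) := by
      rw [hrw, Real.sin_pi_sub]
    have hcos2 : Real.cos (c * (tn n - a)) = -Real.cos (c * (b - tn n)) := by
      rw [hrw, Real.cos_pi_sub]
    have hQle : c * Real.cos (c * (b - tn n)) / Real.sin (c * (b - tn n)) ≤ 1 / (b - tn n) := by
      rw [div_le_div_iff₀ (by rwa [← hsin2]) htb]
      have := mul_cos_le_sin (θ := c * (b - tn n)) (by rw [hθt n]; exact h1)
        (by rw [hθt n]; exact h2)
      nlinarith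
    have hsq := sq_le_right (htn_mem n).1 (htn_mem n).2 hc hd hf'i hfi hb0
    rw [hwdef]
    simp only [hsin2, hcos2]
    have heq : -(f (tn n) ^ 2 * (c * -Real.cos (c * (b - tn n)) / Real.sin (c * (b - tn n))))
        = f (tn n) ^ 2 * (c * Real.cos (c * (b - tn n)) / Real.sin (c * (b - tn n))) := by
      ring
    rw [heq]
    calc f (tn n) ^ 2 * (c * Real.cos (c * (b - tn n)) / Real.sin (c * (b - tn n)))
        ≤ f (tn n) ^ 2 * (1 / (b - tn n)) :=
          mul_le_mul_of_nonneg_left hQle (sq_nonneg _)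
      _ ≤ ((b - tn n) * ∫ t in Ioo (tn n) b, f' t ^ 2) * (1 / (b - tn n)) :=
          mul_le_mul_of_nonneg_right hsq (by positivity)
      _ = ∫ t in Ioo (tn n) b, f' t ^ 2 := by field_simp
  -- the boundary integrals tend to zero
  have santitone : ∀ n : ℕ, sn (n + 1) ≤ sn n := by
    intro n; rw [hsndef]; simp only []
    have : (b - a) / ((n:ℝ) + 1 + 2) ≤ (b - a) / ((n:ℝ) + 2) := by
      apply div_le_div_of_nonneg_left hbapos.le (hden n); push_cast; linarith
    push_cast; linarith [this]
  have tmono : ∀ n : ℕ, tn n ≤ tn (n + 1) := by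
    intro n; rw [htndef]; simp only []
    have : (b - a) / ((n:ℝ) + 1 + 2) ≤ (b - a) / ((n:ℝ) + 2) := by
      apply div_le_div_of_nonneg_left hbapos.le (hden n); push_cast; linarith
    push_cast; linarith [this]
  have hs_lt : ∀ x ∈ Ioo a b, ∃ N : ℕ, ∀ n ≥ N, sn n ≤ x ∧ x ≤ tn n := by
    intro x hx
    obtain ⟨N, hN⟩ := exists_nat_gt (max ((b - a) / (x - a)) ((b - a) / (b - x)))
    refine ⟨N, fun n hn => ?_⟩
    have hxa : 0 < x - a := by linarith [hx.1]
    have hbx : 0 < b - x := by linarith [hx.2]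
    have hn1 : (b - a) / (x - a) < (n:ℝ) + 2 := by
      have : (N:ℝ) ≤ n := Nat.cast_le.2 hn
      have := le_max_left ((b - a) / (x - a)) ((b - a) / (b - x))
      linarith [hN, this]
    have hn2 : (b - a) / (b - x) < (n:ℝ) + 2 := by
      have : (N:ℝ) ≤ n := Nat.cast_le.2 hn
      have := le_max_right ((b - a) / (x - a)) ((b - a) / (b - x))
      linarith [hN, this]
    have h1 : (b - a) / ((n:ℝ) + 2) ≤ x - a := by
      rw [div_le_iff₀ (hden n)]
      rw [div_lt_iff₀ hxa] at hn1
      linarith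
    have h2 : (b - a) / ((n:ℝ) + 2) ≤ b - x := by
      rw [div_le_iff₀ (hden n)]
      rw [div_lt_iff₀ hbx] at hn2
      linarith
    constructor
    · rw [hsndef]; simp only []; linarith
    · rw [htndef]; simp only []; linarith
  have hE1 : Filter.Tendsto (fun n => ∫ t in Ioo a (sn n), f' t ^ 2) Filter.atTop (nhds 0) := by
    have hmono1 : Monotone fun n => Ioo (sn n) b :=
      monotone_nat_of_le_succ fun n => Ioo_subset_Ioo (santitone n) le_rfl
    have hunion1 : (⋃ n, Ioo (sn n) b) = Ioo a b := by
      apply Subset.antisymm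
      · exact iUnion_subset fun n x hx => ⟨lt_trans (hsn_mem n).1 hx.1, hx.2⟩
      · intro x hx
        obtain ⟨N, hN⟩ := hs_lt x hx
        have hstrict : sn (N + 1) < sn N := by
          rw [hsndef]; simp only []
          have : (b - a) / ((N:ℝ) + 1 + 2) < (b - a) / ((N:ℝ) + 2) :=
            div_lt_div_of_pos_left hbapos (hden N) (by push_cast; linarith)
          push_cast at this ⊢; linarith
        exact mem_iUnion.2 ⟨N + 1, lt_of_lt_of_le hstrict (hN N le_rfl).1, hx.2⟩
    have hlim1 : Filter.Tendsto (fun n => ∫ t in Ioo (sn n) b, f' t ^ 2) Filter.atTop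
        (nhds (∫ t in Ioo a b, f' t ^ 2)) := by
      have := tendsto_setIntegral_of_monotone (fun n => measurableSet_Ioo) hmono1
        (by rw [hunion1]; exact hfi)
      rwa [hunion1] at this
    have hub : ∀ n, (∫ t in Ioo a (sn n), f' t ^ 2) ≤
        (∫ t in Ioo a b, f' t ^ 2) - ∫ t in Ioo (sn n) b, f' t ^ 2 := by
      intro n
      have hdisj : Disjoint (Ioo a (sn n)) (Ioo (sn n) b) := by
        apply Set.disjoint_left.2; rintro x ⟨_, h1⟩ ⟨h2, _⟩; linarith
      have hun : ∫ t in Ioo a (sn n) ∪ Ioo (sn n) b, f' t ^ 2 =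
          (∫ t in Ioo a (sn n), f' t ^ 2) + ∫ t in Ioo (sn n) b, f' t ^ 2 :=
        setIntegral_union hdisj measurableSet_Ioo
          (hfi.mono_set (Ioo_subset_Ioo le_rfl (hsn_mem n).2.le))
          (hfi.mono_set (Ioo_subset_Ioo (hsn_mem n).1.le le_rfl))
      have hsub2 : Ioo a (sn n) ∪ Ioo (sn n) b ⊆ Ioo a b :=
        union_subset (Ioo_subset_Ioo le_rfl (hsn_mem n).2.le)
          (Ioo_subset_Ioo (hsn_mem n).1.le le_rfl)
      have hmon := setIntegral_mono_set hfi
        (Filter.Eventually.of_forall fun t => sq_nonneg (f' t))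
        (HasSubset.Subset.eventuallyLE hsub2)
      rw [hun] at hmon
      linarith
    have hlb : ∀ n, 0 ≤ ∫ t in Ioo a (sn n), f' t ^ 2 :=
      fun n => integral_nonneg fun t => sq_nonneg _
    have hDlim : Filter.Tendsto (fun n => (∫ t in Ioo a b, f' t ^ 2)
        - ∫ t in Ioo (sn n) b, f' t ^ 2) Filter.atTop (nhds 0) := by
      have := hlim1.const_sub (∫ t in Ioo a b, f' t ^ 2)
      simpa using this
    exact tendsto_of_tendsto_of_tendsto_of_le_of_le tendsto_const_nhds hDlim hlb hub
  have hE2 : Filter.Tendsto (fun n => ∫ t in Ioo (tn n) b, f' t ^ 2) Filter.atTop (nhds 0) := by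
    have hmono1 : Monotone fun n => Ioo a (tn n) :=
      monotone_nat_of_le_succ fun n => Ioo_subset_Ioo le_rfl (tmono n)
    have hunion1 : (⋃ n, Ioo a (tn n)) = Ioo a b := by
      apply Subset.antisymm
      · exact iUnion_subset fun n x hx => ⟨hx.1, lt_trans hx.2 (htn_mem n).2⟩
      · intro x hx
        obtain ⟨N, hN⟩ := hs_lt x hx
        have hstrict : tn N < tn (N + 1) := by
          rw [htndef]; simp only []
          have : (b - a) / ((N:ℝ) + 1 + 2) < (b - a) / ((N:ℝ) + 2) :=
            div_lt_div_of_pos_left hbapos (hden N) (by push_cast; linarith)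
          push_cast at this ⊢; linarith
        exact mem_iUnion.2 ⟨N + 1, hx.1, lt_of_le_of_lt (hN N le_rfl).2 hstrict⟩
    have hlim1 : Filter.Tendsto (fun n => ∫ t in Ioo a (tn n), f' t ^ 2) Filter.atTop
        (nhds (∫ t in Ioo a b, f' t ^ 2)) := by
      have := tendsto_setIntegral_of_monotone (fun n => measurableSet_Ioo) hmono1
        (by rw [hunion1]; exact hfi)
      rwa [hunion1] at this
    have hub : ∀ n, (∫ t in Ioo (tn n) b, f' t ^ 2) ≤
        (∫ t in Ioo a b, f' t ^ 2) - ∫ t in Ioo a (tn n), f' t ^ 2 := by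
      intro n
      have hdisj : Disjoint (Ioo a (tn n)) (Ioo (tn n) b) := by
        apply Set.disjoint_left.2; rintro x ⟨_, h1⟩ ⟨h2, _⟩; linarith
      have hun : ∫ t in Ioo a (tn n) ∪ Ioo (tn n) b, f' t ^ 2 =
          (∫ t in Ioo a (tn n), f' t ^ 2) + ∫ t in Ioo (tn n) b, f' t ^ 2 :=
        setIntegral_union hdisj measurableSet_Ioo
          (hfi.mono_set (Ioo_subset_Ioo le_rfl (htn_mem n).2.le))
          (hfi.mono_set (Ioo_subset_Ioo (htn_mem n).1.le le_rfl))
      have hsub2 : Ioo a (tn n) ∪ Ioo (tn n) b ⊆ Ioo a b :=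
        union_subset (Ioo_subset_Ioo le_rfl (htn_mem n).2.le)
          (Ioo_subset_Ioo (htn_mem n).1.le le_rfl)
      have hmon := setIntegral_mono_set hfi
        (Filter.Eventually.of_forall fun t => sq_nonneg (f' t))
        (HasSubset.Subset.eventuallyLE hsub2)
      rw [hun] at hmon
      linarith
    have hlb : ∀ n, 0 ≤ ∫ t in Ioo (tn n) b, f' t ^ 2 :=
      fun n => integral_nonneg fun t => sq_nonneg _
    have hDlim : Filter.Tendsto (fun n => (∫ t in Ioo a b, f' t ^ 2)
        - ∫ t in Ioo a (tn n), f' t ^ 2) Filter.atTop (nhds 0) := by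
      have := hlim1.const_sub (∫ t in Ioo a b, f' t ^ 2)
      simpa using this
    exact tendsto_of_tendsto_of_tendsto_of_le_of_le tendsto_const_nhds hDlim hlb hub
  -- per-n inequality via FTC
  have key : ∀ n, w (tn n) - w (sn n) ≤
      ∫ x in Icc (sn n) (tn n), (f' x ^ 2 - c ^ 2 * f x ^ 2) := by
    intro n
    have hIccsub : Icc (sn n) (tn n) ⊆ Ioo a b := fun x hx =>
      ⟨lt_of_lt_of_le (hsn_mem n).1 hx.1, lt_of_le_of_lt hx.2 (htn_mem n).2⟩
    have huicc : uIcc (sn n) (tn n) = Icc (sn n) (tn n) := uIcc_of_le (hst n)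
    have hw'int : IntervalIntegrable w' volume (sn n) (tn n) :=
      (hw'c.mono (huicc ▸ hIccsub)).intervalIntegrable
    have hgint : IntervalIntegrable (fun x => f' x ^ 2 - c ^ 2 * f x ^ 2)
        volume (sn n) (tn n) := (hgc.mono (huicc ▸ hIccsub)).intervalIntegrable
    have hftc : ∫ x in (sn n)..(tn n), w' x = w (tn n) - w (sn n) :=
      intervalIntegral.integral_eq_sub_of_hasDerivAt
        (fun x hx => hw x (hIccsub (huicc ▸ hx))) hw'int
    have hnn : 0 ≤ ∫ x in (sn n)..(tn n), (f' x ^ 2 - c ^ 2 * f x ^ 2 - w' x) := by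
      apply intervalIntegral.integral_nonneg (hst n)
      intro x hx
      have hxIoo : x ∈ Ioo a b := hIccsub hx
      have hs := (hsinpos x hxIoo).ne'
      have hid : f' x ^ 2 - c ^ 2 * f x ^ 2 - w' x =
          (f' x - f x * (c * Real.cos (c * (x - a)) / Real.sin (c * (x - a)))) ^ 2 := by
        rw [hw'def]; simp only []
        have hpyth := Real.sin_sq_add_cos_sq (c * (x - a))
        field_simp
        linear_combination (-(c ^ 2) * f x ^ 2) * hpyth
      rw [hid]
      positivity
    rw [intervalIntegral.integral_sub hgint hw'int, hftc] at hnn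
    have heq2 : ∫ x in (sn n)..(tn n), (f' x ^ 2 - c ^ 2 * f x ^ 2) =
        ∫ x in Icc (sn n) (tn n), (f' x ^ 2 - c ^ 2 * f x ^ 2) := by
      rw [intervalIntegral.integral_of_le (hst n), ← integral_Icc_eq_integral_Ioc]
    linarith [hnn, heq2]
  -- pass to the limit
  have hGint : IntegrableOn (fun x => f' x ^ 2 - c ^ 2 * f x ^ 2) (Ioo a b) :=
    hfi.sub (hf2i.const_mul _)
  have hmono : Monotone fun n => Icc (sn n) (tn n) := by
    apply monotone_nat_of_le_succ
    intro n
    exact Icc_subset_Icc (santitone n) (tmono n)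
  have hunion : (⋃ n, Icc (sn n) (tn n)) = Ioo a b := by
    apply Subset.antisymm
    · refine iUnion_subset fun n => ?_
      intro x hx
      exact ⟨lt_of_lt_of_le (hsn_mem n).1 hx.1, lt_of_le_of_lt hx.2 (htn_mem n).2⟩
    · intro x hx
      obtain ⟨N, hN⟩ := hs_lt x hx
      exact mem_iUnion.2 ⟨N, (hN N le_rfl).1, (hN N le_rfl).2⟩
  have hlim : Filter.Tendsto (fun n => ∫ x in Icc (sn n) (tn n), (f' x ^ 2 - c ^ 2 * f x ^ 2))
      Filter.atTop (nhds (∫ x in Ioo a b, (f' x ^ 2 - c ^ 2 * f x ^ 2))) := by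
    have := tendsto_setIntegral_of_monotone (fun n => measurableSet_Icc) hmono
      (by rw [hunion]; exact hGint)
    rwa [hunion] at this
  have hlim0 : Filter.Tendsto (fun n => w (tn n) - w (sn n)) Filter.atTop (nhds 0) := by
    have hb : Filter.Tendsto (fun n => (∫ t in Ioo (tn n) b, f' t ^ 2)
        + ∫ t in Ioo a (sn n), f' t ^ 2) Filter.atTop (nhds 0) := by
      simpa using hE2.add hE1
    refine squeeze_zero_norm (fun n => ?_) hb
    rw [Real.norm_eq_abs]
    have h1 := hws_nonneg n; have h2 := hws_le n
    have h3 := hwt_nonpos n; have h4 := hwt_le n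
    rw [abs_le]
    constructor <;> linarith
  have hge : 0 ≤ ∫ x in Ioo a b, (f' x ^ 2 - c ^ 2 * f x ^ 2) :=
    le_of_tendsto_of_tendsto' hlim0 hlim key
  rw [integral_sub hfi (hf2i.const_mul _)] at hge
  rw [integral_const_mul] at hge
  rw [← hcdef]
  linarith

lemma uBox_derivX (x y : ℝ) : HasDerivAt (fun z => uBox11 (z, y))
    (Real.sqrt (2/3) * (Real.cos (π * x / 2) * (π / 2)) * Real.sin (π * (y + 1) / 3)) x := by
  have h1 : HasDerivAt (fun z : ℝ => π * z / 2) (π / 2) x := by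
    simpa using ((hasDerivAt_id x).const_mul π).div_const 2
  have h2 : HasDerivAt (fun z : ℝ => Real.sin (π * z / 2))
      (Real.cos (π * x / 2) * (π / 2)) x := (Real.hasDerivAt_sin _).comp x h1
  exact (h2.const_mul (Real.sqrt (2/3))).mul_const (Real.sin (π * (y + 1) / 3))

lemma uBox_derivY (x y : ℝ) : HasDerivAt (fun z => uBox11 (x, z))
    ((Real.sqrt (2/3) * Real.sin (π * x / 2)) * (Real.cos (π * (y + 1) / 3) * (π / 3))) y := by
  have h1 : HasDerivAt (fun z : ℝ => π * (z + 1) / 3) (π / 3) y := by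
    simpa using (((hasDerivAt_id y).add_const 1).const_mul π).div_const 3
  have h2 : HasDerivAt (fun z : ℝ => Real.sin (π * (z + 1) / 3))
      (Real.cos (π * (y + 1) / 3) * (π / 3)) y := (Real.hasDerivAt_sin _).comp y h1
  exact h2.const_mul (Real.sqrt (2/3) * Real.sin (π * x / 2))

lemma I_cos : ∫ x in Ioo (0:ℝ) 2, Real.cos (π * x / 2) ^ 2 = 1 := by
  rw [← integral_Ioc_eq_integral_Ioo, ← intervalIntegral.integral_of_le (by norm_num : (0:ℝ) ≤ 2)]
  have hrw : ∀ x : ℝ, π * x / 2 = π / 2 * x := fun x => by ring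
  simp_rw [hrw]
  rw [intervalIntegral.integral_comp_mul_left (fun t => Real.cos t ^ 2)
    (by positivity : (π/2 : ℝ) ≠ 0)]
  rw [integral_cos_sq]
  rw [show (π:ℝ)/2*2 = π by ring, show (π:ℝ)/2*0 = 0 by ring]
  simp [Real.sin_pi, Real.cos_pi]

lemma I_sin : ∫ x in Ioo (0:ℝ) 2, Real.sin (π * x / 2) ^ 2 = 1 := by
  rw [← integral_Ioc_eq_integral_Ioo, ← intervalIntegral.integral_of_le (by norm_num : (0:ℝ) ≤ 2)]
  have hrw : ∀ x : ℝ, π * x / 2 = π / 2 * x := fun x => by ring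
  simp_rw [hrw]
  rw [intervalIntegral.integral_comp_mul_left (fun t => Real.sin t ^ 2)
    (by positivity : (π/2 : ℝ) ≠ 0)]
  rw [integral_sin_sq]
  rw [show (π:ℝ)/2*2 = π by ring, show (π:ℝ)/2*0 = 0 by ring]
  simp [Real.sin_pi, Real.cos_pi]

lemma I_sin3 : ∫ y in Ioo (-1:ℝ) 2, Real.sin (π * (y + 1) / 3) ^ 2 = 3/2 := by
  rw [← integral_Ioc_eq_integral_Ioo,
    ← intervalIntegral.integral_of_le (by norm_num : (-1:ℝ) ≤ 2)]
  rw [intervalIntegral.integral_comp_add_right (fun t => Real.sin (π * t / 3) ^ 2) 1]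
  rw [show (-1:ℝ) + 1 = 0 by norm_num, show (2:ℝ) + 1 = 3 by norm_num]
  have hrw : ∀ x : ℝ, π * x / 3 = π / 3 * x := fun x => by ring
  simp_rw [hrw]
  rw [intervalIntegral.integral_comp_mul_left (fun t => Real.sin t ^ 2)
    (by positivity : (π/3 : ℝ) ≠ 0)]
  rw [integral_sin_sq]
  rw [show (π:ℝ)/3*3 = π by ring, show (π:ℝ)/3*0 = 0 by ring]
  simp [Real.sin_pi, Real.cos_pi]
  field_simp

lemma I_cos3 : ∫ y in Ioo (-1:ℝ) 2, Real.cos (π * (y + 1) / 3) ^ 2 = 3/2 := by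
  rw [← integral_Ioc_eq_integral_Ioo,
    ← intervalIntegral.integral_of_le (by norm_num : (-1:ℝ) ≤ 2)]
  rw [intervalIntegral.integral_comp_add_right (fun t => Real.cos (π * t / 3) ^ 2) 1]
  rw [show (-1:ℝ) + 1 = 0 by norm_num, show (2:ℝ) + 1 = 3 by norm_num]
  have hrw : ∀ x : ℝ, π * x / 3 = π / 3 * x := fun x => by ring
  simp_rw [hrw]
  rw [intervalIntegral.integral_comp_mul_left (fun t => Real.cos t ^ 2)
    (by positivity : (π/3 : ℝ) ≠ 0)]
  rw [integral_cos_sq]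
  rw [show (π:ℝ)/3*3 = π by ring, show (π:ℝ)/3*0 = 0 by ring]
  simp [Real.sin_pi, Real.cos_pi]
  field_simp

lemma box_equality :
    (4 * ∫ p in Set.Ioo (0:ℝ) 2 ×ˢ Set.Ioo (-1:ℝ) 2,
          ((deriv (fun s => uBox11 (s, p.2)) p.1) ^ 2
            + (deriv (fun s => uBox11 (p.1, s)) p.2) ^ 2))
        = 13 * π ^ 2 / 9 := by
  have hs23 : Real.sqrt (2/3) ^ 2 = 2/3 := Real.sq_sqrt (by norm_num)
  have hrd : ∀ p : ℝ × ℝ,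
      (deriv (fun s => uBox11 (s, p.2)) p.1) ^ 2 + (deriv (fun s => uBox11 (p.1, s)) p.2) ^ 2
        = (fun x => 2/3 * (π/2) ^ 2 * Real.cos (π * x / 2) ^ 2) p.1
            * (fun y => Real.sin (π * (y + 1) / 3) ^ 2) p.2
          + (fun x => 2/3 * (π/3) ^ 2 * Real.sin (π * x / 2) ^ 2) p.1
            * (fun y => Real.cos (π * (y + 1) / 3) ^ 2) p.2 := by
    intro p
    rw [(uBox_derivX p.1 p.2).deriv, (uBox_derivY p.1 p.2).deriv]
    simp only []
    linear_combination ((π/2) ^ 2 * Real.cos (π * p.1 / 2) ^ 2 * Real.sin (π * (p.2 + 1) / 3) ^ 2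
      + (π/3) ^ 2 * Real.sin (π * p.1 / 2) ^ 2 * Real.cos (π * (p.2 + 1) / 3) ^ 2) * hs23
  have hRsub : Set.Ioo (0:ℝ) 2 ×ˢ Set.Ioo (-1:ℝ) 2 ⊆ Set.Icc (0:ℝ) 2 ×ˢ Set.Icc (-1:ℝ) 2 :=
    Set.prod_mono Ioo_subset_Icc_self Ioo_subset_Icc_self
  have hK : IsCompact (Set.Icc (0:ℝ) 2 ×ˢ Set.Icc (-1:ℝ) 2) := isCompact_Icc.prod isCompact_Icc
  have hcont1 : Continuous (fun p : ℝ × ℝ =>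
      (2/3 * (π/2) ^ 2 * Real.cos (π * p.1 / 2) ^ 2) * Real.sin (π * (p.2 + 1) / 3) ^ 2) := by
    fun_prop
  have hcont2 : Continuous (fun p : ℝ × ℝ =>
      (2/3 * (π/3) ^ 2 * Real.sin (π * p.1 / 2) ^ 2) * Real.cos (π * (p.2 + 1) / 3) ^ 2) := by
    fun_prop
  have hint1 : IntegrableOn (fun p : ℝ × ℝ =>
      (2/3 * (π/2) ^ 2 * Real.cos (π * p.1 / 2) ^ 2) * Real.sin (π * (p.2 + 1) / 3) ^ 2)
      (Set.Ioo (0:ℝ) 2 ×ˢ Set.Ioo (-1:ℝ) 2) :=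
    (hcont1.continuousOn.integrableOn_compact hK).mono_set hRsub
  have hint2 : IntegrableOn (fun p : ℝ × ℝ =>
      (2/3 * (π/3) ^ 2 * Real.sin (π * p.1 / 2) ^ 2) * Real.cos (π * (p.2 + 1) / 3) ^ 2)
      (Set.Ioo (0:ℝ) 2 ×ˢ Set.Ioo (-1:ℝ) 2) :=
    (hcont2.continuousOn.integrableOn_compact hK).mono_set hRsub
  rw [setIntegral_congr_fun ((isOpen_Ioo.prod isOpen_Ioo).measurableSet) (fun p _ => hrd p)]
  rw [integral_add hint1 hint2]
  rw [Measure.volume_eq_prod]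
  rw [setIntegral_prod_mul (fun x => 2/3 * (π/2) ^ 2 * Real.cos (π * x / 2) ^ 2)
    (fun y => Real.sin (π * (y + 1) / 3) ^ 2)]
  rw [setIntegral_prod_mul (fun x => 2/3 * (π/3) ^ 2 * Real.sin (π * x / 2) ^ 2)
    (fun y => Real.cos (π * (y + 1) / 3) ^ 2)]
  rw [integral_const_mul, integral_const_mul, I_cos, I_sin, I_sin3, I_cos3]
  ring

lemma box_inequality
    (u : ℝ × ℝ → ℝ)
    (hu_smooth : ContDiffOn ℝ 1 u (Set.Ioo (0:ℝ) 2 ×ˢ Set.Ioo (-1:ℝ) 2))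
    (hu_cont : ContinuousOn u (closure (Set.Ioo (0:ℝ) 2 ×ˢ Set.Ioo (-1:ℝ) 2)))
    (hu_boundary : ∀ p ∈ frontier (Set.Ioo (0:ℝ) 2 ×ˢ Set.Ioo (-1:ℝ) 2), u p = 0)
    (hu_norm : ∫ p in Set.Ioo (0:ℝ) 2 ×ˢ Set.Ioo (-1:ℝ) 2, (u p)^2 = 1)
    (hfisher_fin : IntegrableOn (fun p : ℝ × ℝ =>
        (deriv (fun s => u (s, p.2)) p.1)^2 + (deriv (fun s => u (p.1, s)) p.2)^2)
      (Set.Ioo (0:ℝ) 2 ×ˢ Set.Ioo (-1:ℝ) 2)) :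
    13 * π^2 / 9
      ≤ 4 * ∫ p in Set.Ioo (0:ℝ) 2 ×ˢ Set.Ioo (-1:ℝ) 2,
          ((deriv (fun s => u (s, p.2)) p.1)^2
            + (deriv (fun s => u (p.1, s)) p.2)^2) := by
  have hRopen : IsOpen (Set.Ioo (0:ℝ) 2 ×ˢ Set.Ioo (-1:ℝ) 2) := isOpen_Ioo.prod isOpen_Ioo
  have hRmeas : MeasurableSet (Set.Ioo (0:ℝ) 2 ×ˢ Set.Ioo (-1:ℝ) 2) := hRopen.measurableSet
  have hclos : closure (Set.Ioo (0:ℝ) 2 ×ˢ Set.Ioo (-1:ℝ) 2)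
      = Set.Icc (0:ℝ) 2 ×ˢ Set.Icc (-1:ℝ) 2 := by
    rw [closure_prod_eq, closure_Ioo (by norm_num : (0:ℝ) ≠ 2),
      closure_Ioo (by norm_num : (-1:ℝ) ≠ 2)]
  have hfrontX : ∀ y ∈ Set.Icc (-1:ℝ) 2, u (0, y) = 0 ∧ u (2, y) = 0 := by
    intro y hy
    have h0 : ((0:ℝ), y) ∈ frontier (Set.Ioo (0:ℝ) 2 ×ˢ Set.Ioo (-1:ℝ) 2) := by
      rw [frontier_prod_eq, frontier_Ioo (by norm_num : (0:ℝ) < 2),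
        closure_Ioo (by norm_num : (-1:ℝ) ≠ 2)]
      exact Set.mem_union_right _ ⟨by simp, hy⟩
    have h2 : ((2:ℝ), y) ∈ frontier (Set.Ioo (0:ℝ) 2 ×ˢ Set.Ioo (-1:ℝ) 2) := by
      rw [frontier_prod_eq, frontier_Ioo (by norm_num : (0:ℝ) < 2),
        closure_Ioo (by norm_num : (-1:ℝ) ≠ 2)]
      exact Set.mem_union_right _ ⟨by simp, hy⟩
    exact ⟨hu_boundary _ h0, hu_boundary _ h2⟩
  have hfrontY : ∀ x ∈ Set.Icc (0:ℝ) 2, u (x, -1) = 0 ∧ u (x, 2) = 0 := by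
    intro x hx
    have h0 : ((x:ℝ), (-1:ℝ)) ∈ frontier (Set.Ioo (0:ℝ) 2 ×ˢ Set.Ioo (-1:ℝ) 2) := by
      rw [frontier_prod_eq, frontier_Ioo (by norm_num : (-1:ℝ) < 2),
        closure_Ioo (by norm_num : (0:ℝ) ≠ 2)]
      exact Set.mem_union_left _ ⟨hx, by simp⟩
    have h2 : ((x:ℝ), (2:ℝ)) ∈ frontier (Set.Ioo (0:ℝ) 2 ×ˢ Set.Ioo (-1:ℝ) 2) := by
      rw [frontier_prod_eq, frontier_Ioo (by norm_num : (-1:ℝ) < 2),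
        closure_Ioo (by norm_num : (0:ℝ) ≠ 2)]
      exact Set.mem_union_left _ ⟨hx, by simp⟩
    exact ⟨hu_boundary _ h0, hu_boundary _ h2⟩
  have hdiff : ∀ p ∈ Set.Ioo (0:ℝ) 2 ×ˢ Set.Ioo (-1:ℝ) 2, DifferentiableAt ℝ u p :=
    fun p hp => (hu_smooth.differentiableOn one_ne_zero).differentiableAt (hRopen.mem_nhds hp)
  have hderivX : ∀ x y, (x, y) ∈ Set.Ioo (0:ℝ) 2 ×ˢ Set.Ioo (-1:ℝ) 2 →
      HasDerivAt (fun z => u (z, y)) (fderiv ℝ u (x, y) (1, 0)) x := by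
    intro x y hp
    have h := (hdiff (x, y) hp).hasFDerivAt
    have hline : HasDerivAt (fun z : ℝ => ((z, y) : ℝ × ℝ)) ((1:ℝ), (0:ℝ)) x :=
      (hasDerivAt_id x).prodMk (hasDerivAt_const x y)
    exact h.comp_hasDerivAt x hline
  have hderivY : ∀ x y, (x, y) ∈ Set.Ioo (0:ℝ) 2 ×ˢ Set.Ioo (-1:ℝ) 2 →
      HasDerivAt (fun z => u (x, z)) (fderiv ℝ u (x, y) (0, 1)) y := by
    intro x y hp
    have h := (hdiff (x, y) hp).hasFDerivAt
    have hline : HasDerivAt (fun z : ℝ => ((x, z) : ℝ × ℝ)) ((0:ℝ), (1:ℝ)) y :=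
      (hasDerivAt_const y x).prodMk (hasDerivAt_id y)
    exact h.comp_hasDerivAt y hline
  have hEqX : ∀ x y, (x, y) ∈ Set.Ioo (0:ℝ) 2 ×ˢ Set.Ioo (-1:ℝ) 2 →
      deriv (fun z => u (z, y)) x = fderiv ℝ u (x, y) (1, 0) :=
    fun x y hp => (hderivX x y hp).deriv
  have hEqY : ∀ x y, (x, y) ∈ Set.Ioo (0:ℝ) 2 ×ˢ Set.Ioo (-1:ℝ) 2 →
      deriv (fun z => u (x, z)) y = fderiv ℝ u (x, y) (0, 1) :=
    fun x y hp => (hderivY x y hp).deriv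
  -- continuity of the derivative on the open rectangle
  have hfderivC : ContinuousOn (fun p => fderiv ℝ u p) (Set.Ioo (0:ℝ) 2 ×ˢ Set.Ioo (-1:ℝ) 2) := by
    have h1 := hu_smooth.continuousOn_fderivWithin hRopen.uniqueDiffOn le_rfl
    exact h1.congr fun p hp => (fderivWithin_of_isOpen hRopen hp).symm
  -- measurability and integrability of the two gradient components
  have haemX : AEStronglyMeasurable (fun p : ℝ × ℝ => (deriv (fun z => u (z, p.2)) p.1) ^ 2)
      (volume.restrict (Set.Ioo (0:ℝ) 2 ×ˢ Set.Ioo (-1:ℝ) 2)) := by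
    have hm : Measurable fun p : ℝ × ℝ => (fderiv ℝ u p (1, 0)) ^ 2 :=
      (measurable_fderiv_apply_const ℝ u _).pow_const 2
    refine hm.aestronglyMeasurable.congr ?_
    filter_upwards [ae_restrict_mem hRmeas] with p hp
    rw [hEqX p.1 p.2 (by simpa using hp)]
  have haemY : AEStronglyMeasurable (fun p : ℝ × ℝ => (deriv (fun z => u (p.1, z)) p.2) ^ 2)
      (volume.restrict (Set.Ioo (0:ℝ) 2 ×ˢ Set.Ioo (-1:ℝ) 2)) := by
    have hm : Measurable fun p : ℝ × ℝ => (fderiv ℝ u p (0, 1)) ^ 2 :=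
      (measurable_fderiv_apply_const ℝ u _).pow_const 2
    refine hm.aestronglyMeasurable.congr ?_
    filter_upwards [ae_restrict_mem hRmeas] with p hp
    rw [hEqY p.1 p.2 (by simpa using hp)]
  have hintX : IntegrableOn (fun p : ℝ × ℝ => (deriv (fun z => u (z, p.2)) p.1) ^ 2)
      (Set.Ioo (0:ℝ) 2 ×ˢ Set.Ioo (-1:ℝ) 2) := by
    refine hfisher_fin.mono' haemX ?_
    refine Filter.Eventually.of_forall fun p => ?_
    rw [Real.norm_eq_abs, abs_of_nonneg (sq_nonneg _)]
    nlinarith [sq_nonneg (deriv (fun z => u (p.1, z)) p.2)]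
  have hintY : IntegrableOn (fun p : ℝ × ℝ => (deriv (fun z => u (p.1, z)) p.2) ^ 2)
      (Set.Ioo (0:ℝ) 2 ×ˢ Set.Ioo (-1:ℝ) 2) := by
    refine hfisher_fin.mono' haemY ?_
    refine Filter.Eventually.of_forall fun p => ?_
    rw [Real.norm_eq_abs, abs_of_nonneg (sq_nonneg _)]
    nlinarith [sq_nonneg (deriv (fun z => u (z, p.2)) p.1)]
  have huc2 : IntegrableOn (fun p => u p ^ 2) (Set.Ioo (0:ℝ) 2 ×ˢ Set.Ioo (-1:ℝ) 2) := by
    have hK : IsCompact (closure (Set.Ioo (0:ℝ) 2 ×ˢ Set.Ioo (-1:ℝ) 2)) := by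
      rw [hclos]; exact isCompact_Icc.prod isCompact_Icc
    exact ((hu_cont.pow 2).integrableOn_compact hK).mono_set subset_closure
  -- restricted product measure
  have hprodR : (volume : Measure (ℝ × ℝ)).restrict (Set.Ioo (0:ℝ) 2 ×ˢ Set.Ioo (-1:ℝ) 2)
      = ((volume.restrict (Set.Ioo (0:ℝ) 2)).prod (volume.restrict (Set.Ioo (-1:ℝ) 2))) := by
    rw [Measure.volume_eq_prod, Measure.prod_restrict]
  -- integrable w.r.t. the product of restricted measures
  have hintY' : Integrable (fun p : ℝ × ℝ => (deriv (fun z => u (p.1, z)) p.2) ^ 2)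
      ((volume.restrict (Set.Ioo (0:ℝ) 2)).prod (volume.restrict (Set.Ioo (-1:ℝ) 2))) := by
    rw [← hprodR]; exact hintY
  have hintX' : Integrable (fun p : ℝ × ℝ => (deriv (fun z => u (z, p.2)) p.1) ^ 2)
      ((volume.restrict (Set.Ioo (0:ℝ) 2)).prod (volume.restrict (Set.Ioo (-1:ℝ) 2))) := by
    rw [← hprodR]; exact hintX
  have huc2' : Integrable (fun p : ℝ × ℝ => u p ^ 2)
      ((volume.restrict (Set.Ioo (0:ℝ) 2)).prod (volume.restrict (Set.Ioo (-1:ℝ) 2))) := by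
    rw [← hprodR]; exact huc2
  have hsliceY : ∀ᵐ x ∂(volume.restrict (Set.Ioo (0:ℝ) 2)),
      Integrable (fun y => (deriv (fun z => u (x, z)) y) ^ 2)
        (volume.restrict (Set.Ioo (-1:ℝ) 2)) := hintY'.prod_right_ae
  have hsliceX : ∀ᵐ y ∂(volume.restrict (Set.Ioo (-1:ℝ) 2)),
      Integrable (fun x => (deriv (fun z => u (z, y)) x) ^ 2)
        (volume.restrict (Set.Ioo (0:ℝ) 2)) := hintX'.prod_left_ae
  -- a.e. slice inequality in the y direction
  have haeY : ∀ᵐ x ∂(volume.restrict (Set.Ioo (0:ℝ) 2)),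
      (π/3) ^ 2 * (∫ y in Set.Ioo (-1:ℝ) 2, u (x, y) ^ 2)
        ≤ ∫ y in Set.Ioo (-1:ℝ) 2, (deriv (fun z => u (x, z)) y) ^ 2 := by
    filter_upwards [hsliceY, ae_restrict_mem measurableSet_Ioo] with x hxint hxmem
    have hxIcc : x ∈ Set.Icc (0:ℝ) 2 := Ioo_subset_Icc_self hxmem
    have hmap : Continuous (fun y : ℝ => ((x, y) : ℝ × ℝ)) :=
      continuous_const.prodMk continuous_id
    have hcontS : ContinuousOn (fun y => u (x, y)) (Set.Icc (-1:ℝ) 2) := by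
      refine hu_cont.comp hmap.continuousOn ?_
      intro y hy; rw [hclos]; exact ⟨hxIcc, hy⟩
    have hdS : ∀ y ∈ Set.Ioo (-1:ℝ) 2,
        HasDerivAt (fun z => u (x, z)) (deriv (fun z => u (x, z)) y) y := by
      intro y hy
      rw [hEqY x y ⟨hxmem, hy⟩]
      exact hderivY x y ⟨hxmem, hy⟩
    have hcS : ContinuousOn (fun y => deriv (fun z => u (x, z)) y) (Set.Ioo (-1:ℝ) 2) := by
      have h2 : ContinuousOn (fun y => fderiv ℝ u (x, y)) (Set.Ioo (-1:ℝ) 2) :=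
        hfderivC.comp hmap.continuousOn fun y hy => ⟨hxmem, hy⟩
      exact (h2.clm_apply continuousOn_const).congr fun y hy => hEqY x y ⟨hxmem, hy⟩
    have hb := hfrontY x hxIcc
    have hw := wirtinger_1d (by norm_num : (-1:ℝ) < 2) hcontS hdS hcS hxint hb.1 hb.2
    rw [show (2:ℝ) - (-1) = 3 by norm_num] at hw
    exact hw
  -- a.e. slice inequality in the x direction
  have haeX : ∀ᵐ y ∂(volume.restrict (Set.Ioo (-1:ℝ) 2)),
      (π/2) ^ 2 * (∫ x in Set.Ioo (0:ℝ) 2, u (x, y) ^ 2)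
        ≤ ∫ x in Set.Ioo (0:ℝ) 2, (deriv (fun z => u (z, y)) x) ^ 2 := by
    filter_upwards [hsliceX, ae_restrict_mem measurableSet_Ioo] with y hyint hymem
    have hyIcc : y ∈ Set.Icc (-1:ℝ) 2 := Ioo_subset_Icc_self hymem
    have hmap : Continuous (fun x : ℝ => ((x, y) : ℝ × ℝ)) :=
      continuous_id.prodMk continuous_const
    have hcontS : ContinuousOn (fun x => u (x, y)) (Set.Icc (0:ℝ) 2) := by
      refine hu_cont.comp hmap.continuousOn ?_
      intro x hx; rw [hclos]; exact ⟨hx, hyIcc⟩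
    have hdS : ∀ x ∈ Set.Ioo (0:ℝ) 2,
        HasDerivAt (fun z => u (z, y)) (deriv (fun z => u (z, y)) x) x := by
      intro x hx
      rw [hEqX x y ⟨hx, hymem⟩]
      exact hderivX x y ⟨hx, hymem⟩
    have hcS : ContinuousOn (fun x => deriv (fun z => u (z, y)) x) (Set.Ioo (0:ℝ) 2) := by
      have h2 : ContinuousOn (fun x => fderiv ℝ u (x, y)) (Set.Ioo (0:ℝ) 2) :=
        hfderivC.comp hmap.continuousOn fun x hx => ⟨hx, hymem⟩
      exact (h2.clm_apply continuousOn_const).congr fun x hx => hEqX x y ⟨hx, hymem⟩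
    have hb := hfrontX y hyIcc
    have hw := wirtinger_1d (by norm_num : (0:ℝ) < 2) hcontS hdS hcS hyint hb.1 hb.2
    rw [show (2:ℝ) - 0 = 2 by norm_num] at hw
    exact hw
  -- Fubini for the three integrals
  have hFubY : ∫ p in Set.Ioo (0:ℝ) 2 ×ˢ Set.Ioo (-1:ℝ) 2,
      (deriv (fun z => u (p.1, z)) p.2) ^ 2
        = ∫ x in Set.Ioo (0:ℝ) 2, ∫ y in Set.Ioo (-1:ℝ) 2,
            (deriv (fun z => u (x, z)) y) ^ 2 := by
    rw [Measure.volume_eq_prod, ← Measure.prod_restrict]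
    exact integral_prod _ hintY'
  have hFubX : ∫ p in Set.Ioo (0:ℝ) 2 ×ˢ Set.Ioo (-1:ℝ) 2,
      (deriv (fun z => u (z, p.2)) p.1) ^ 2
        = ∫ y in Set.Ioo (-1:ℝ) 2, ∫ x in Set.Ioo (0:ℝ) 2,
            (deriv (fun z => u (z, y)) x) ^ 2 := by
    rw [Measure.volume_eq_prod, ← Measure.prod_restrict]
    exact integral_prod_symm _ hintX'
  have hFubU1 : ∫ p in Set.Ioo (0:ℝ) 2 ×ˢ Set.Ioo (-1:ℝ) 2, u p ^ 2
      = ∫ x in Set.Ioo (0:ℝ) 2, ∫ y in Set.Ioo (-1:ℝ) 2, u (x, y) ^ 2 := by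
    rw [Measure.volume_eq_prod, ← Measure.prod_restrict]
    exact integral_prod _ huc2'
  have hFubU2 : ∫ p in Set.Ioo (0:ℝ) 2 ×ˢ Set.Ioo (-1:ℝ) 2, u p ^ 2
      = ∫ y in Set.Ioo (-1:ℝ) 2, ∫ x in Set.Ioo (0:ℝ) 2, u (x, y) ^ 2 := by
    rw [Measure.volume_eq_prod, ← Measure.prod_restrict]
    exact integral_prod_symm _ huc2'
  -- integrate the slice inequalities
  have hY : (π/3) ^ 2 * ∫ p in Set.Ioo (0:ℝ) 2 ×ˢ Set.Ioo (-1:ℝ) 2, u p ^ 2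
      ≤ ∫ p in Set.Ioo (0:ℝ) 2 ×ˢ Set.Ioo (-1:ℝ) 2, (deriv (fun z => u (p.1, z)) p.2) ^ 2 := by
    rw [hFubY, hFubU1, ← integral_const_mul]
    exact integral_mono_ae ((huc2'.integral_prod_left).const_mul _)
      hintY'.integral_prod_left haeY
  have hX : (π/2) ^ 2 * ∫ p in Set.Ioo (0:ℝ) 2 ×ˢ Set.Ioo (-1:ℝ) 2, u p ^ 2
      ≤ ∫ p in Set.Ioo (0:ℝ) 2 ×ˢ Set.Ioo (-1:ℝ) 2, (deriv (fun z => u (z, p.2)) p.1) ^ 2 := by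
    rw [hFubX, hFubU2, ← integral_const_mul]
    exact integral_mono_ae ((huc2'.integral_prod_right).const_mul _)
      hintX'.integral_prod_right haeX
  -- combine
  rw [integral_add hintX hintY]
  have h2 : ((π:ℝ)/2) ^ 2 = π ^ 2 / 4 := by ring
  have h3 : ((π:ℝ)/3) ^ 2 = π ^ 2 / 9 := by ring
  rw [hu_norm, mul_one] at hX hY
  rw [h2] at hX
  rw [h3] at hY
  linarith

/-- **Theorem 2 on the rectangle: minimal Fisher information.** For any probability
density `ρ = u²` on `Δ = (0,2) × (-1,2)` with `u` continuously differentiable on `Δ`,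
continuous on the closure, vanishing on the boundary, normalized, and with
`∫_Δ |∇u|² < ∞`, the Fisher information satisfies `F[ρ] = 4∫_Δ |∇u|² ≥ 13π²/9`, with
equality for the ground-state density `ρ_{1,1} = u_{1,1}²` of the infinite potential
well on `Δ`. -/
theorem box_minimal_fisher_information
    (u : ℝ × ℝ → ℝ)
    (hu_smooth : ContDiffOn ℝ 1 u (Set.Ioo (0:ℝ) 2 ×ˢ Set.Ioo (-1:ℝ) 2))
    (hu_cont : ContinuousOn u (closure (Set.Ioo (0:ℝ) 2 ×ˢ Set.Ioo (-1:ℝ) 2)))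
    (hu_boundary : ∀ p ∈ frontier (Set.Ioo (0:ℝ) 2 ×ˢ Set.Ioo (-1:ℝ) 2), u p = 0)
    (hu_norm : ∫ p in Set.Ioo (0:ℝ) 2 ×ˢ Set.Ioo (-1:ℝ) 2, (u p)^2 = 1)
    (hfisher_fin : IntegrableOn (fun p : ℝ × ℝ =>
        (deriv (fun s => u (s, p.2)) p.1)^2 + (deriv (fun s => u (p.1, s)) p.2)^2)
      (Set.Ioo (0:ℝ) 2 ×ˢ Set.Ioo (-1:ℝ) 2)) :
    13 * π^2 / 9
      ≤ 4 * ∫ p in Set.Ioo (0:ℝ) 2 ×ˢ Set.Ioo (-1:ℝ) 2,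
          ((deriv (fun s => u (s, p.2)) p.1)^2
            + (deriv (fun s => u (p.1, s)) p.2)^2)
    ∧ (4 * ∫ p in Set.Ioo (0:ℝ) 2 ×ˢ Set.Ioo (-1:ℝ) 2,
          ((deriv (fun s => uBox11 (s, p.2)) p.1)^2
            + (deriv (fun s => uBox11 (p.1, s)) p.2)^2))
        = 13 * π^2 / 9 := by
  exact ⟨box_inequality u hu_smooth hu_cont hu_boundary hu_norm hfisher_fin, box_equality⟩
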